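/- Let -1 ≤ p < 0 and let H be a complex Hilbert space. For A ∈ B(H)⁺ one has A = 0 if and only if A 𝔪ₚ X = A holds for every X ∈ B(H)⁺. -/

import Mathlib

open scoped NNReal

set_option maxHeartbeats 1000000

variable {H : Type*} [NormedAddCommGroup H] [InnerProductSpace ℂ H] [CompleteSpace H]

/-- `m` is the Kubo–Ando `p`-th power mean on positive operators: it is given by
`A 𝔪ₚ B = A^(1/2) ((1 + (A^(-1/2) B A^(-1/2))^p)/2)^(1/p) A^(1/2)` on invertible positive
operators, and is determined on all positive operators by the strong limit
`(A 𝔪ₚ B) x = lim_{ε→0⁺} ((A + εI) 𝔪ₚ (B + εI)) x`. -/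
def IsKuboAndoPowerMean (p : ℝ) (m : (H →L[ℂ] H) → (H →L[ℂ] H) → (H →L[ℂ] H)) : Prop :=
  (∀ A B : H →L[ℂ] H, 0 ≤ A → 0 ≤ B → IsUnit A → IsUnit B →
      m A B = A ^ ((2 : ℝ)⁻¹) *
        ((2 : ℝ)⁻¹ • (1 + (A ^ (-(2 : ℝ)⁻¹) * B * A ^ (-(2 : ℝ)⁻¹)) ^ p)) ^ p⁻¹ *
        A ^ ((2 : ℝ)⁻¹)) ∧
  (∀ A B : H →L[ℂ] H, 0 ≤ A → 0 ≤ B → ∀ x : H,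
      Filter.Tendsto (fun ε : ℝ => (m (A + ε • 1) (B + ε • 1)) x)
        (nhdsWithin 0 (Set.Ioi 0)) (nhds ((m A B) x)))

namespace KuboAndoAux

noncomputable def gmid (p : ℝ) : ℝ≥0 → ℝ≥0 := fun t => ((2:ℝ≥0)⁻¹ * (1 + t ^ p)) ^ p⁻¹

lemma gmid_ne_zero_arg (p : ℝ) (t : ℝ≥0) : (2:ℝ≥0)⁻¹ * (1 + t ^ p) ≠ 0 := by positivity

lemma gmid_le (p : ℝ) (hp1 : p < 0) (t : ℝ≥0) : gmid p t ≤ (2:ℝ≥0) ^ (-p⁻¹ : ℝ) := by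
  have h1 : (2:ℝ≥0)⁻¹ ≤ (2:ℝ≥0)⁻¹ * (1 + t ^ p) := by
    nth_rewrite 1 [← mul_one (2:ℝ≥0)⁻¹]
    exact mul_le_mul_right (le_add_right le_rfl) _
  have h2 : gmid p t ≤ ((2:ℝ≥0)⁻¹) ^ (p⁻¹ : ℝ) :=
    NNReal.rpow_le_rpow_of_nonpos (by norm_num) h1 (inv_nonpos.mpr hp1.le)
  refine h2.trans_eq ?_
  rw [← NNReal.rpow_neg_one (2:ℝ≥0), ← NNReal.rpow_mul, neg_one_mul]

lemma scalar_bound (p : ℝ) (hp1 : p < 0) (c t : ℝ≥0) (hc : c ≠ 0) (ht : t ≠ 0) :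
    t ^ ((2:ℝ)⁻¹) * gmid p (c * t ^ (-1:ℝ)) * t ^ ((2:ℝ)⁻¹)
      ≤ (2:ℝ≥0) ^ (-p⁻¹ : ℝ) * c := by
  have hp : p ≠ 0 := hp1.ne
  set x : ℝ≥0 := c * t ^ (-1:ℝ) with hxdef
  have hx : x ≠ 0 := by
    refine mul_ne_zero hc ?_
    simp [NNReal.rpow_eq_zero_iff, ht]
  have hxp : x ^ p ≠ 0 := by simp [NNReal.rpow_eq_zero_iff, hx]
  have h1 : gmid p x ≤ ((2:ℝ≥0)⁻¹ * x ^ p) ^ (p⁻¹ : ℝ) := by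
    refine NNReal.rpow_le_rpow_of_nonpos ?_ ?_ (inv_nonpos.mpr hp1.le)
    · positivity
    · exact mul_le_mul_right le_add_self _
  have h2 : ((2:ℝ≥0)⁻¹ * x ^ p) ^ (p⁻¹ : ℝ) = (2:ℝ≥0) ^ (-p⁻¹ : ℝ) * x := by
    rw [NNReal.mul_rpow, ← NNReal.rpow_mul x p p⁻¹, mul_inv_cancel₀ hp, NNReal.rpow_one,
      ← NNReal.rpow_neg_one (2:ℝ≥0), ← NNReal.rpow_mul, neg_one_mul]
  have ht2 : t ^ ((2:ℝ)⁻¹) * t ^ ((2:ℝ)⁻¹) * t ^ (-1:ℝ) = 1 := by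
    rw [← NNReal.rpow_add ht, ← NNReal.rpow_add ht]
    norm_num
  have h3 : t ^ ((2:ℝ)⁻¹) * ((2:ℝ≥0) ^ (-p⁻¹ : ℝ) * x) * t ^ ((2:ℝ)⁻¹)
      = (2:ℝ≥0) ^ (-p⁻¹ : ℝ) * c := by
    calc t ^ ((2:ℝ)⁻¹) * ((2:ℝ≥0) ^ (-p⁻¹ : ℝ) * x) * t ^ ((2:ℝ)⁻¹)
        = (2:ℝ≥0) ^ (-p⁻¹ : ℝ) * c * (t ^ ((2:ℝ)⁻¹) * t ^ ((2:ℝ)⁻¹) * t ^ (-1:ℝ)) := by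
          rw [hxdef]; ring
      _ = (2:ℝ≥0) ^ (-p⁻¹ : ℝ) * c := by rw [ht2, mul_one]
  calc t ^ ((2:ℝ)⁻¹) * gmid p x * t ^ ((2:ℝ)⁻¹)
      ≤ t ^ ((2:ℝ)⁻¹) * ((2:ℝ≥0) ^ (-p⁻¹ : ℝ) * x) * t ^ ((2:ℝ)⁻¹) :=
        mul_le_mul' (mul_le_mul' le_rfl (h1.trans_eq h2)) le_rfl
    _ = (2:ℝ≥0) ^ (-p⁻¹ : ℝ) * c := h3

/-- The middle factor of the Kubo-Ando power mean formula, as a cfc of its (conjugated)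
second argument. -/
lemma mid_cfc (p : ℝ) (Y : H →L[ℂ] H) (hY : 0 ≤ Y) (hY0 : 0 ∉ spectrum ℝ≥0 Y) :
    ((2:ℝ)⁻¹ • (1 + Y ^ p)) ^ p⁻¹ = cfc (gmid p) Y := by
  have hcont : ContinuousOn (fun t : ℝ≥0 => t ^ p) (spectrum ℝ≥0 Y) :=
    NNReal.continuousOn_rpow_const (.inl hY0)
  have hg : ContinuousOn (fun x : ℝ≥0 => x ^ p⁻¹)
      ((fun t : ℝ≥0 => (2:ℝ≥0)⁻¹ * (1 + t ^ p)) '' spectrum ℝ≥0 Y) := by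
    refine NNReal.continuousOn_rpow_const (.inl ?_)
    rintro ⟨t, -, ht⟩
    exact gmid_ne_zero_arg p t ht
  have h1 : Y ^ p = cfc (fun t : ℝ≥0 => t ^ p) Y := CFC.rpow_def
  have h2 : (1:H →L[ℂ] H) + Y ^ p = cfc (fun t : ℝ≥0 => 1 + t ^ p) Y := by
    rw [h1, ← cfc_const_one ℝ≥0 Y hY,
      ← cfc_add (a := Y) (fun _ => (1:ℝ≥0)) (fun t => t ^ p) continuousOn_const hcont]
  have h3 : (2:ℝ)⁻¹ • ((1:H →L[ℂ] H) + Y ^ p)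
      = cfc (fun t : ℝ≥0 => (2:ℝ≥0)⁻¹ * (1 + t ^ p)) Y := by
    rw [h2, cfc_const_mul ((2:ℝ≥0)⁻¹) (fun t : ℝ≥0 => 1 + t ^ p) Y (continuousOn_const.add hcont), NNReal.smul_def]
    norm_num
  calc ((2:ℝ)⁻¹ • ((1:H →L[ℂ] H) + Y ^ p)) ^ p⁻¹
      = (cfc (fun t : ℝ≥0 => (2:ℝ≥0)⁻¹ * (1 + t ^ p)) Y) ^ p⁻¹ := by rw [h3]
    _ = cfc (fun x : ℝ≥0 => x ^ p⁻¹) (cfc (fun t : ℝ≥0 => (2:ℝ≥0)⁻¹ * (1 + t ^ p)) Y) :=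
        CFC.rpow_def
    _ = cfc ((fun x : ℝ≥0 => x ^ p⁻¹) ∘ (fun t : ℝ≥0 => (2:ℝ≥0)⁻¹ * (1 + t ^ p))) Y :=
        (cfc_comp (fun x : ℝ≥0 => x ^ p⁻¹) (fun t : ℝ≥0 => (2:ℝ≥0)⁻¹ * (1 + t ^ p)) Y hY hg
          (continuousOn_const.mul (continuousOn_const.add hcont))).symm
    _ = cfc (gmid p) Y := rfl

lemma gmid_contOn (p : ℝ) {s : Set ℝ≥0} (hs : 0 ∉ s) : ContinuousOn (gmid p) s := by
  have h1 : ContinuousOn (fun t : ℝ≥0 => (2:ℝ≥0)⁻¹ * (1 + t ^ p)) s :=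
    continuousOn_const.mul (continuousOn_const.add (NNReal.continuousOn_rpow_const (.inl hs)))
  have h2 : ContinuousOn (fun x : ℝ≥0 => x ^ p⁻¹)
      ((fun t : ℝ≥0 => (2:ℝ≥0)⁻¹ * (1 + t ^ p)) '' s) := by
    refine NNReal.continuousOn_rpow_const (.inl ?_)
    rintro ⟨t, -, ht⟩
    exact gmid_ne_zero_arg p t ht
  exact h2.comp h1 (Set.mapsTo_image _ _)

lemma nnnorm_algebraMap_le (r : ℝ≥0) : ‖algebraMap ℝ≥0 (H →L[ℂ] H) r‖₊ ≤ r := by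
  rw [Algebra.algebraMap_eq_smul_one, NNReal.smul_def, nnnorm_smul]
  calc ‖(r:ℝ)‖₊ * ‖(1 : H →L[ℂ] H)‖₊ ≤ ‖(r:ℝ)‖₊ * 1 := by
        refine mul_le_mul_right ?_ _
        change ‖(ContinuousLinearMap.id ℂ H)‖₊ ≤ 1
        exact_mod_cast ContinuousLinearMap.norm_id_le
    _ = r := by simp [Real.nnnorm_of_nonneg r.2]

lemma smul_one_nonneg {ε : ℝ} (hε : 0 ≤ ε) : (0 : H →L[ℂ] H) ≤ ε • 1 := by
  have h := star_mul_self_nonneg ((Real.sqrt ε) • 1 : H →L[ℂ] H)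
  simpa [star_smul, smul_smul, Real.mul_self_sqrt hε] using h

lemma isUnit_add_smul_one {A : H →L[ℂ] H} (hA : 0 ≤ A) {ε : ℝ} (hε : 0 < ε) :
    IsUnit (A + ε • 1) := by
  have h1 : IsUnit (ε • (1 : H →L[ℂ] H)) := by
    rw [← Algebra.algebraMap_eq_smul_one]
    exact (isUnit_iff_ne_zero.mpr hε.ne').map (algebraMap ℝ (H →L[ℂ] H))
  exact CStarAlgebra.isUnit_of_le _ (le_add_of_nonneg_left hA) ⟨smul_one_nonneg hε.le, h1⟩

/-- Norm bound for the Kubo-Ando formula when the first argument is a positive scalar. -/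
lemma bound_left (p : ℝ) (hp1 : p < 0) (B : H →L[ℂ] H) (hB : 0 ≤ B) (hBu : IsUnit B)
    {ε : ℝ} (hε : 0 < ε) :
    ‖(ε • 1 : H →L[ℂ] H) ^ ((2:ℝ)⁻¹) *
        ((2:ℝ)⁻¹ • (1 + ((ε • 1 : H →L[ℂ] H) ^ (-(2:ℝ)⁻¹) * B *
          (ε • 1 : H →L[ℂ] H) ^ (-(2:ℝ)⁻¹)) ^ p)) ^ p⁻¹ *
        (ε • 1 : H →L[ℂ] H) ^ ((2:ℝ)⁻¹)‖₊
      ≤ (2:ℝ≥0) ^ (-p⁻¹ : ℝ) * ε.toNNReal := by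
  set c : ℝ≥0 := ε.toNNReal with hcdef
  have hc : (c : ℝ) = ε := Real.coe_toNNReal _ hε.le
  have hc0 : c ≠ 0 := by
    simp only [hcdef, ne_eq, Real.toNNReal_eq_zero, not_le]
    exact hε
  have halg : (ε • 1 : H →L[ℂ] H) = algebraMap ℝ≥0 (H →L[ℂ] H) c := by
    rw [Algebra.algebraMap_eq_smul_one, NNReal.smul_def, hc]
  have hpow : ∀ r : ℝ, (ε • 1 : H →L[ℂ] H) ^ r = algebraMap ℝ≥0 (H →L[ℂ] H) (c ^ r) := by
    intro r
    rw [halg, CFC.rpow_algebraMap]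
  set Y : H →L[ℂ] H :=
    (ε • 1 : H →L[ℂ] H) ^ (-(2:ℝ)⁻¹) * B * (ε • 1 : H →L[ℂ] H) ^ (-(2:ℝ)⁻¹) with hYdef
  have hYnn : 0 ≤ Y := by
    have h := star_left_conjugate_nonneg hB ((ε • 1 : H →L[ℂ] H) ^ (-(2:ℝ)⁻¹))
    rwa [(IsSelfAdjoint.of_nonneg CFC.rpow_nonneg).star_eq] at h
  have hYu : IsUnit Y := by
    have hu : IsUnit ((ε • 1 : H →L[ℂ] H) ^ (-(2:ℝ)⁻¹)) := by
      rw [hpow]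
      refine (isUnit_iff_ne_zero.mpr ?_).map (algebraMap ℝ≥0 (H →L[ℂ] H))
      simp [NNReal.rpow_eq_zero_iff, hc0]
    exact (hu.mul hBu).mul hu
  have hY0 : 0 ∉ spectrum ℝ≥0 Y := spectrum.zero_notMem ℝ≥0 hYu
  have hmid : ((2:ℝ)⁻¹ • (1 + Y ^ p)) ^ p⁻¹ = cfc (gmid p) Y := mid_cfc p Y hYnn hY0
  have hmid_le : ‖cfc (gmid p) Y‖₊ ≤ (2:ℝ≥0) ^ (-p⁻¹ : ℝ) :=
    nnnorm_cfc_nnreal_le (fun t _ => gmid_le p hp1 t)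
  rw [hmid, hpow]
  calc ‖algebraMap ℝ≥0 (H →L[ℂ] H) (c ^ ((2:ℝ)⁻¹)) * cfc (gmid p) Y *
        algebraMap ℝ≥0 (H →L[ℂ] H) (c ^ ((2:ℝ)⁻¹))‖₊
      ≤ ‖algebraMap ℝ≥0 (H →L[ℂ] H) (c ^ ((2:ℝ)⁻¹)) * cfc (gmid p) Y‖₊ *
        ‖algebraMap ℝ≥0 (H →L[ℂ] H) (c ^ ((2:ℝ)⁻¹))‖₊ := nnnorm_mul_le _ _
    _ ≤ ‖algebraMap ℝ≥0 (H →L[ℂ] H) (c ^ ((2:ℝ)⁻¹))‖₊ * ‖cfc (gmid p) Y‖₊ *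
        ‖algebraMap ℝ≥0 (H →L[ℂ] H) (c ^ ((2:ℝ)⁻¹))‖₊ :=
        mul_le_mul_left (nnnorm_mul_le _ _) _
    _ ≤ (c ^ ((2:ℝ)⁻¹)) * ((2:ℝ≥0) ^ (-p⁻¹ : ℝ)) * (c ^ ((2:ℝ)⁻¹)) := by
        exact mul_le_mul' (mul_le_mul' (nnnorm_algebraMap_le _) hmid_le)
          (nnnorm_algebraMap_le _)
    _ = (2:ℝ≥0) ^ (-p⁻¹ : ℝ) * (c ^ ((2:ℝ)⁻¹) * c ^ ((2:ℝ)⁻¹)) := by ring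
    _ = (2:ℝ≥0) ^ (-p⁻¹ : ℝ) * c := by
        rw [← NNReal.rpow_add hc0]
        norm_num

/-- Norm bound for the Kubo-Ando formula when the second argument is a positive scalar. -/
lemma bound_right (p : ℝ) (hp1 : p < 0) (D : H →L[ℂ] H) (hD : 0 ≤ D) (hDu : IsUnit D)
    {ε : ℝ} (hε : 0 < ε) :
    ‖D ^ ((2:ℝ)⁻¹) *
        ((2:ℝ)⁻¹ • (1 + (D ^ (-(2:ℝ)⁻¹) * (ε • 1) * D ^ (-(2:ℝ)⁻¹)) ^ p)) ^ p⁻¹ *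
        D ^ ((2:ℝ)⁻¹)‖₊
      ≤ (2:ℝ≥0) ^ (-p⁻¹ : ℝ) * ε.toNNReal := by
  set c : ℝ≥0 := ε.toNNReal with hcdef
  have hc : (c : ℝ) = ε := Real.coe_toNNReal _ hε.le
  have hc0 : c ≠ 0 := by
    simp only [hcdef, ne_eq, Real.toNNReal_eq_zero, not_le]
    exact hε
  have hD0 : 0 ∉ spectrum ℝ≥0 D := spectrum.zero_notMem ℝ≥0 hDu
  set f : ℝ≥0 → ℝ≥0 := fun t => c * t ^ (-1:ℝ) with hfdef
  have hfco : ContinuousOn f (spectrum ℝ≥0 D) :=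
    continuousOn_const.mul (NNReal.continuousOn_rpow_const (.inl hD0))
  have hf0 : ∀ t ∈ spectrum ℝ≥0 D, f t ≠ 0 := by
    intro t ht
    have ht0 : t ≠ 0 := fun h => hD0 (h ▸ ht)
    simp [hfdef, NNReal.rpow_eq_zero_iff, hc0, ht0]
  have hW : D ^ (-(2:ℝ)⁻¹) * (ε • 1) * D ^ (-(2:ℝ)⁻¹) = cfc f D := by
    calc D ^ (-(2:ℝ)⁻¹) * (ε • 1) * D ^ (-(2:ℝ)⁻¹)
        = ε • (D ^ (-(2:ℝ)⁻¹) * D ^ (-(2:ℝ)⁻¹)) := by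
          rw [mul_smul_comm, mul_one, smul_mul_assoc]
      _ = ε • D ^ ((-(2:ℝ)⁻¹) + (-(2:ℝ)⁻¹)) := by rw [CFC.rpow_add hDu]
      _ = ε • D ^ (-1:ℝ) := by norm_num
      _ = cfc f D := by
          rw [CFC.rpow_def, hfdef,
            cfc_const_mul c (fun t : ℝ≥0 => t ^ (-1:ℝ)) D
              (NNReal.continuousOn_rpow_const (.inl hD0)),
            NNReal.smul_def, hc]
  have hWnn : 0 ≤ cfc f D := cfc_predicate _ D
  have hW0 : 0 ∉ spectrum ℝ≥0 (cfc f D) := by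
    rw [cfc_map_spectrum f D hD hfco]
    rintro ⟨t, ht, ht'⟩
    exact hf0 t ht ht'
  have hmid : ((2:ℝ)⁻¹ • (1 + (cfc f D) ^ p)) ^ p⁻¹ = cfc (gmid p ∘ f) D := by
    rw [mid_cfc p (cfc f D) hWnn hW0]
    refine (cfc_comp (gmid p) f D hD ?_ hfco).symm
    refine gmid_contOn p ?_
    rintro ⟨t, ht, ht'⟩
    exact hf0 t ht ht'
  have hhalf : ContinuousOn (fun t : ℝ≥0 => t ^ ((2:ℝ)⁻¹)) (spectrum ℝ≥0 D) :=
    NNReal.continuousOn_rpow_const (.inr (by norm_num))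
  have hgf : ContinuousOn (gmid p ∘ f) (spectrum ℝ≥0 D) := by
    refine ContinuousOn.comp (gmid_contOn p ?_) hfco (Set.mapsTo_image _ _)
    rintro ⟨t, ht, ht'⟩
    exact hf0 t ht ht'
  have hwhole : D ^ ((2:ℝ)⁻¹) *
      ((2:ℝ)⁻¹ • (1 + (D ^ (-(2:ℝ)⁻¹) * (ε • 1) * D ^ (-(2:ℝ)⁻¹)) ^ p)) ^ p⁻¹ *
      D ^ ((2:ℝ)⁻¹)
      = cfc (fun t : ℝ≥0 => t ^ ((2:ℝ)⁻¹) * (gmid p ∘ f) t * t ^ ((2:ℝ)⁻¹)) D := by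
    rw [hW, hmid, CFC.rpow_def,
      cfc_mul (fun t : ℝ≥0 => t ^ ((2:ℝ)⁻¹) * (gmid p ∘ f) t)
        (fun t : ℝ≥0 => t ^ ((2:ℝ)⁻¹)) D (hhalf.mul hgf) hhalf,
      cfc_mul (fun t : ℝ≥0 => t ^ ((2:ℝ)⁻¹)) (gmid p ∘ f) D hhalf hgf]
  rw [hwhole]
  refine nnnorm_cfc_nnreal_le fun t ht => ?_
  have ht0 : t ≠ 0 := fun h => hD0 (h ▸ ht)
  exact scalar_bound p hp1 c t hc0 ht0

end KuboAndoAux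

/-- For `-1 ≤ p < 0` and a positive operator `A`, one has `A = 0` iff
`A 𝔪ₚ X = A` for every positive operator `X`. -/
theorem eq_zero_iff_kuboAndo_fixed (p : ℝ) (hp0 : -1 ≤ p) (hp1 : p < 0)
    (m : (H →L[ℂ] H) → (H →L[ℂ] H) → (H →L[ℂ] H)) (hm : IsKuboAndoPowerMean p m)
    (A : H →L[ℂ] H) (hA : 0 ≤ A) :
    A = 0 ↔ ∀ X : H →L[ℂ] H, 0 ≤ X → m A X = A := by
  obtain ⟨hfor, hlim⟩ := hm
  set K : ℝ≥0 := (2:ℝ≥0) ^ (-p⁻¹ : ℝ) with hKdef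
  constructor
  · rintro rfl X hX
    refine ContinuousLinearMap.ext fun x => ?_
    have ht := hlim 0 X le_rfl hX x
    have h0 : Filter.Tendsto (fun ε : ℝ => (m (0 + ε • 1) (X + ε • 1)) x)
        (nhdsWithin 0 (Set.Ioi 0)) (nhds 0) := by
      refine squeeze_zero_norm' (a := fun ε : ℝ => (K:ℝ) * ε * ‖x‖) ?_ ?_
      · filter_upwards [self_mem_nhdsWithin] with ε hε
        have hε' : (0:ℝ) < ε := hε
        have hBnn : 0 ≤ X + ε • 1 := add_nonneg hX (KuboAndoAux.smul_one_nonneg hε'.le)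
        have hBu : IsUnit (X + ε • 1) := KuboAndoAux.isUnit_add_smul_one hX hε'
        have hAnn : 0 ≤ (ε • 1 : H →L[ℂ] H) := KuboAndoAux.smul_one_nonneg hε'.le
        have hAu : IsUnit (ε • 1 : H →L[ℂ] H) := by
          have := KuboAndoAux.isUnit_add_smul_one (le_refl (0 : H →L[ℂ] H)) hε'
          rwa [zero_add] at this
        rw [zero_add, hfor (ε • 1) (X + ε • 1) hAnn hBnn hAu hBu]
        have hb := KuboAndoAux.bound_left p hp1 (X + ε • 1) hBnn hBu hε'
        have hb' := (NNReal.coe_le_coe).mpr hb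
        rw [NNReal.coe_mul, coe_nnnorm, Real.coe_toNNReal _ hε'.le] at hb'
        refine (ContinuousLinearMap.le_opNorm _ x).trans ?_
        exact mul_le_mul_of_nonneg_right hb' (norm_nonneg x)
      · have hcont : Continuous fun ε : ℝ => (K:ℝ) * ε * ‖x‖ :=
          (continuous_const.mul continuous_id).mul continuous_const
        refine Filter.Tendsto.mono_left ?_ (nhdsWithin_le_nhds (s := Set.Ioi (0:ℝ)))
        simpa using hcont.tendsto 0
    have := tendsto_nhds_unique ht h0
    simpa using this
  · intro h
    refine ContinuousLinearMap.ext fun x => ?_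
    have ht := hlim A 0 hA le_rfl x
    rw [h 0 le_rfl] at ht
    have h0 : Filter.Tendsto (fun ε : ℝ => (m (A + ε • 1) (0 + ε • 1)) x)
        (nhdsWithin 0 (Set.Ioi 0)) (nhds 0) := by
      refine squeeze_zero_norm' (a := fun ε : ℝ => (K:ℝ) * ε * ‖x‖) ?_ ?_
      · filter_upwards [self_mem_nhdsWithin] with ε hε
        have hε' : (0:ℝ) < ε := hε
        have hDnn : 0 ≤ A + ε • 1 := add_nonneg hA (KuboAndoAux.smul_one_nonneg hε'.le)
        have hDu : IsUnit (A + ε • 1) := KuboAndoAux.isUnit_add_smul_one hA hε'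
        have hBnn : 0 ≤ (ε • 1 : H →L[ℂ] H) := KuboAndoAux.smul_one_nonneg hε'.le
        have hBu : IsUnit (ε • 1 : H →L[ℂ] H) := by
          have := KuboAndoAux.isUnit_add_smul_one (le_refl (0 : H →L[ℂ] H)) hε'
          rwa [zero_add] at this
        rw [zero_add, hfor (A + ε • 1) (ε • 1) hDnn hBnn hDu hBu]
        have hb := KuboAndoAux.bound_right p hp1 (A + ε • 1) hDnn hDu hε'
        have hb' := (NNReal.coe_le_coe).mpr hb
        rw [NNReal.coe_mul, coe_nnnorm, Real.coe_toNNReal _ hε'.le] at hb'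
        refine (ContinuousLinearMap.le_opNorm _ x).trans ?_
        exact mul_le_mul_of_nonneg_right hb' (norm_nonneg x)
      · have hcont : Continuous fun ε : ℝ => (K:ℝ) * ε * ‖x‖ :=
          (continuous_const.mul continuous_id).mul continuous_const
        refine Filter.Tendsto.mono_left ?_ (nhdsWithin_le_nhds (s := Set.Ioi (0:ℝ)))
        simpa using hcont.tendsto 0
    have := tendsto_nhds_unique ht h0
    simpa using this
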